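/- Let α > −1 be real and let m, n be natural numbers with m ≠ n. Then ∫_0^{∞} L_m^{(α)}(x) L_n^{(α)}(x) x^{α} e^{−x} dx = 0. That is, the generalized Laguerre polynomials with parameter α are pairwise orthogonal on [0, ∞) with respect to the weight function ω(x) = x^{α} e^{−x}. -/

import Mathlib

open Real MeasureTheory Finset Nat

/-- The generalized Laguerre polynomial, given by the explicit formula
`L n^(α) x = ∑_{k=0}^{n} (-1)^k C(n + α, n - k) x^k / k!`, where the generalized
binomial coefficient is `C(n + α, n - k) = Γ(n + α + 1) / (Γ(α + k + 1) (n - k)!)`. -/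
noncomputable def genLaguerre (α : ℝ) (n : ℕ) (x : ℝ) : ℝ :=
  ∑ k ∈ Finset.range (n + 1),
    (-1 : ℝ) ^ k *
      (Real.Gamma ((n : ℝ) + α + 1) / (Real.Gamma (α + (k : ℝ) + 1) * ((n - k)! : ℝ))) *
      x ^ k / (k ! : ℝ)

open Polynomial

lemma fwdDiff_iter_poly_eq_zero : ∀ (n : ℕ) (p : Polynomial ℝ), p.degree < n →
    ∀ y : ℝ, (fwdDiff (1:ℝ))^[n] (fun x => p.eval x) y = 0 := by
  intro n
  induction n with
  | zero =>
    intro p hp y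
    rw [Nat.cast_zero, Nat.WithBot.lt_zero_iff, Polynomial.degree_eq_bot] at hp
    simp [hp]
  | succ n ih =>
    intro p hp y
    rw [Function.iterate_succ_apply]
    have hq : (fwdDiff (1:ℝ)) (fun x => p.eval x)
        = fun x => (p.comp (X + C 1) - p).eval x := by
      funext x
      simp [fwdDiff, Polynomial.eval_comp]
    rw [hq]
    apply ih
    rcases eq_or_ne p 0 with rfl | hp0
    · simp only [Polynomial.zero_comp, sub_zero, Polynomial.degree_zero]
      exact WithBot.bot_lt_coe n
    · have hXC : (X + C (1:ℝ)).natDegree = 1 := Polynomial.natDegree_X_add_C 1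
      have hlc : (p.comp (X + C 1)).leadingCoeff = p.leadingCoeff := by
        rw [Polynomial.leadingCoeff_comp (by rw [hXC]; norm_num),
          Polynomial.leadingCoeff_X_add_C, one_pow, mul_one]
      have hcomp0 : p.comp (X + C 1) ≠ 0 := by
        intro h
        apply hp0
        rw [← Polynomial.leadingCoeff_eq_zero, ← hlc, h, Polynomial.leadingCoeff_zero]
      have hdeg : (p.comp (X + C 1)).degree = p.degree := by
        rw [Polynomial.degree_eq_natDegree hcomp0, Polynomial.degree_eq_natDegree hp0,
          Polynomial.natDegree_comp, hXC, mul_one]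
      have h1 : (p.comp (X + C 1) - p).degree < p.degree :=
        hdeg ▸ Polynomial.degree_sub_lt hdeg hcomp0 hlc
      have h2 : p.degree ≤ n := by
        have := Polynomial.degree_eq_natDegree hp0
        rw [this] at hp ⊢
        exact_mod_cast Nat.lt_succ_iff.mp (by exact_mod_cast hp)
      exact lt_of_lt_of_le h1 h2

lemma alt_sum_poly (n : ℕ) (p : Polynomial ℝ) (hp : p.degree < n) :
    ∑ k ∈ Finset.range (n+1), (-1:ℝ)^k * (n.choose k) * p.eval (k:ℝ) = 0 := by
  have h := fwdDiff_iter_eq_sum_shift (1:ℝ) (fun x => p.eval x) n 0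
  rw [fwdDiff_iter_poly_eq_zero n p hp 0] at h
  have h2 : (0:ℝ) = ∑ k ∈ Finset.range (n+1), (-1:ℝ)^(n-k) * (n.choose k) * p.eval (k:ℝ) := by
    rw [h]
    apply Finset.sum_congr rfl
    intro k hk
    push_cast [zsmul_eq_mul, nsmul_eq_mul]
    ring
  have h3 : ∑ k ∈ Finset.range (n+1), (-1:ℝ)^k * (n.choose k) * p.eval (k:ℝ)
      = (-1:ℝ)^n * ∑ k ∈ Finset.range (n+1), (-1:ℝ)^(n-k) * (n.choose k) * p.eval (k:ℝ) := by
    rw [Finset.mul_sum]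
    apply Finset.sum_congr rfl
    intro k hk
    have hk' : k ≤ n := Nat.lt_succ_iff.mp (Finset.mem_range.mp hk)
    have : (-1:ℝ)^k = (-1:ℝ)^n * (-1:ℝ)^(n-k) := by
      rw [← pow_add, show n + (n-k) = 2*(n-k) + k by omega, pow_add, pow_mul, neg_one_sq,
        one_pow, one_mul]
    rw [this]; ring
  rw [h3, ← h2, mul_zero]

lemma Gamma_add_nat (c : ℝ) (hc : 0 < c) (j : ℕ) :
    Real.Gamma (c + j) = Real.Gamma c * ∏ i ∈ Finset.range j, (c + i) := by
  induction j with
  | zero => simp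
  | succ j ih =>
    have h1 : c + ((j:ℕ)+1 : ℕ) = (c + j) + 1 := by push_cast; ring
    have h2 : c + (j:ℝ) ≠ 0 := by positivity
    rw [h1, Real.Gamma_add_one h2, Finset.prod_range_succ, ih]
    ring

lemma key_sum (α : ℝ) (hα : -1 < α) (n j : ℕ) (hj : j < n) :
    ∑ k ∈ Finset.range (n+1),
      (-1:ℝ)^k * (Real.Gamma ((n:ℝ) + α + 1) / (Real.Gamma (α + (k:ℝ) + 1) * ((n-k)! : ℝ)))
        / (k ! : ℝ) * Real.Gamma (α + (j:ℝ) + (k:ℝ) + 1) = 0 := by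
  set p : Polynomial ℝ := ∏ i ∈ Finset.range j, (Polynomial.X + Polynomial.C (α + 1 + i)) with hp
  have hpdeg : p.degree < n := by
    have : p.degree = j := by
      have hd : ∀ i ∈ Finset.range j, (Polynomial.X + Polynomial.C (α+1+(i:ℝ))).degree = 1 :=
        fun i _ => Polynomial.degree_X_add_C _
      rw [hp, Polynomial.degree_prod, Finset.sum_congr rfl hd]
      simp
    rw [this]
    exact_mod_cast hj
  have halt := alt_sum_poly n p hpdeg
  have hterm : ∀ k ∈ Finset.range (n+1),
      (-1:ℝ)^k * (Real.Gamma ((n:ℝ) + α + 1) / (Real.Gamma (α + (k:ℝ) + 1) * ((n-k)! : ℝ)))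
        / (k ! : ℝ) * Real.Gamma (α + (j:ℝ) + (k:ℝ) + 1)
      = (Real.Gamma ((n:ℝ) + α + 1) / (n ! : ℝ)) * ((-1:ℝ)^k * (n.choose k) * p.eval (k:ℝ)) := by
    intro k hk
    have hk' : k ≤ n := Nat.lt_succ_iff.mp (Finset.mem_range.mp hk)
    have hc : (0:ℝ) < α + (k:ℝ) + 1 := by
      have : (0:ℝ) ≤ (k:ℝ) := Nat.cast_nonneg k
      linarith
    have hG : Real.Gamma (α + (j:ℝ) + (k:ℝ) + 1)
        = Real.Gamma (α + (k:ℝ) + 1) * p.eval (k:ℝ) := by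
      have h1 : α + (j:ℝ) + (k:ℝ) + 1 = (α + (k:ℝ) + 1) + (j:ℕ) := by push_cast; ring
      rw [h1, Gamma_add_nat _ hc]
      congr 1
      rw [hp, Polynomial.eval_prod]
      apply Finset.prod_congr rfl
      intro i _
      simp
      ring
    have hGk : Real.Gamma (α + (k:ℝ) + 1) ≠ 0 := (Real.Gamma_pos_of_pos hc).ne'
    have hcho : ((n.choose k : ℝ)) * (k ! : ℝ) * ((n-k)! : ℝ) = (n ! : ℝ) := by
      exact_mod_cast congrArg (Nat.cast : ℕ → ℝ) (Nat.choose_mul_factorial_mul_factorial hk')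
    have hk0 : (k ! : ℝ) ≠ 0 := Nat.cast_ne_zero.mpr (Nat.factorial_ne_zero k)
    have hnk0 : ((n-k)! : ℝ) ≠ 0 := Nat.cast_ne_zero.mpr (Nat.factorial_ne_zero (n-k))
    have hn0 : (n ! : ℝ) ≠ 0 := Nat.cast_ne_zero.mpr (Nat.factorial_ne_zero n)
    rw [hG]
    field_simp
    linear_combination (-(Real.Gamma ((n:ℝ) + α + 1)
      * p.eval (k:ℝ))) * hcho
  rw [Finset.sum_congr rfl hterm, ← Finset.mul_sum, halt, mul_zero]

lemma integrable_term (α : ℝ) (hα : -1 < α) (d : ℕ) :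
    IntegrableOn (fun x : ℝ => x ^ d * x ^ α * Real.exp (-x)) (Set.Ioi 0) := by
  have hs : 0 < α + d + 1 := by
    have : (0:ℝ) ≤ (d:ℝ) := Nat.cast_nonneg d
    linarith
  refine (Real.GammaIntegral_convergent hs).congr_fun (fun x hx => ?_) measurableSet_Ioi
  have hx0 : (0:ℝ) < x := hx
  rw [show α + (d:ℝ) + 1 - 1 = (d:ℝ) + α by ring]
  beta_reduce
  rw [Real.rpow_add hx0, Real.rpow_natCast]
  ring

lemma integral_term (α : ℝ) (hα : -1 < α) (d : ℕ) :
    ∫ x in Set.Ioi (0:ℝ), x ^ d * x ^ α * Real.exp (-x) = Real.Gamma (α + d + 1) := by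
  have hs : 0 < α + d + 1 := by
    have : (0:ℝ) ≤ (d:ℝ) := Nat.cast_nonneg d
    linarith
  rw [Real.Gamma_eq_integral hs]
  refine setIntegral_congr_fun measurableSet_Ioi (fun x hx => ?_)
  have hx0 : (0:ℝ) < x := hx
  rw [show α + (d:ℝ) + 1 - 1 = (d:ℝ) + α by ring, Real.rpow_add hx0, Real.rpow_natCast]
  ring

lemma aux (α : ℝ) (hα : -1 < α) (m n : ℕ) (hmn : m < n) :
    ∫ x in Set.Ioi (0:ℝ),
      genLaguerre α m x * genLaguerre α n x * x ^ α * Real.exp (-x) = 0 := by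
  set A : ℕ → ℝ := fun j =>
    (-1:ℝ)^j * (Real.Gamma ((m:ℝ)+α+1)/(Real.Gamma (α+(j:ℝ)+1)*((m-j)! : ℝ))) / (j ! : ℝ)
    with hA
  set B : ℕ → ℝ := fun k =>
    (-1:ℝ)^k * (Real.Gamma ((n:ℝ)+α+1)/(Real.Gamma (α+(k:ℝ)+1)*((n-k)! : ℝ))) / (k ! : ℝ)
    with hB
  have hpt : ∀ x : ℝ, genLaguerre α m x * genLaguerre α n x * x ^ α * Real.exp (-x)
      = ∑ j ∈ Finset.range (m+1), ∑ k ∈ Finset.range (n+1),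
          (A j * B k) * (x ^ (j+k) * x ^ α * Real.exp (-x)) := by
    intro x
    unfold genLaguerre
    rw [Finset.sum_mul_sum, Finset.sum_mul, Finset.sum_mul]
    refine Finset.sum_congr rfl fun j hj => ?_
    rw [Finset.sum_mul, Finset.sum_mul]
    refine Finset.sum_congr rfl fun k hk => ?_
    rw [pow_add, hA, hB]
    ring
  simp_rw [hpt]
  rw [MeasureTheory.integral_finset_sum _ (fun j hj =>
    (integrable_finset_sum _ (fun k hk =>
      ((integrable_term α hα (j+k)).const_mul (A j * B k)))))]
  refine Finset.sum_eq_zero fun j hj => ?_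
  rw [MeasureTheory.integral_finset_sum _ (fun k hk =>
    ((integrable_term α hα (j+k)).const_mul (A j * B k)))]
  have hjn : j < n := lt_of_le_of_lt (Nat.lt_succ_iff.mp (Finset.mem_range.mp hj)) hmn
  have h0 := key_sum α hα n j hjn
  calc ∑ k ∈ Finset.range (n+1),
        ∫ x in Set.Ioi (0:ℝ), (A j * B k) * (x ^ (j+k) * x ^ α * Real.exp (-x))
      = ∑ k ∈ Finset.range (n+1), (A j * B k) * Real.Gamma (α + (j:ℝ) + (k:ℝ) + 1) := by
        refine Finset.sum_congr rfl fun k hk => ?_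
        rw [MeasureTheory.integral_const_mul, integral_term α hα (j+k)]
        congr 1
        push_cast
        ring
    _ = A j * ∑ k ∈ Finset.range (n+1), B k * Real.Gamma (α + (j:ℝ) + (k:ℝ) + 1) := by
        rw [Finset.mul_sum]
        exact Finset.sum_congr rfl fun k hk => by ring
    _ = 0 := by simp only [hB]; rw [h0, mul_zero]

/-- For `α > -1`, the generalized Laguerre polynomials with parameter `α` are pairwise
orthogonal on `[0, ∞)` with respect to the weight function `x^α exp (-x)`. -/
theorem genLaguerre_orthogonal (α : ℝ) (hα : -1 < α) (m n : ℕ) (hmn : m ≠ n) :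
    ∫ x in Set.Ioi (0:ℝ),
      genLaguerre α m x * genLaguerre α n x * x ^ α * Real.exp (-x) = 0 := by
  rcases hmn.lt_or_gt with h | h
  · exact aux α hα m n h
  · calc ∫ x in Set.Ioi (0:ℝ),
          genLaguerre α m x * genLaguerre α n x * x ^ α * Real.exp (-x)
        = ∫ x in Set.Ioi (0:ℝ),
          genLaguerre α n x * genLaguerre α m x * x ^ α * Real.exp (-x) :=
          setIntegral_congr_fun measurableSet_Ioi fun x _ => by ring
      _ = 0 := aux α hα n m h
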